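/- arXiv:1105.2378 — 4 statements merged into one kernel-verified Lean document; each statement's English description precedes it below -/
import Mathlib

section
/- Fix 0 < α₁ < α₂ and suppose there exists κ₂ > 0 such that for every (a₁,a₂) ∈ ℝ² and every κ₁ ≥ 0 there exists a Lyapunov function on all of ℝ² for the operator L with parameters (a₁, a₂, α₁, α₂, κ₁, κ₂). Then for every (b₁,b₂) ∈ ℝ², every ι₁ ≥ 0 and every ι₂ > 0, there exists a Lyapunov function on all of ℝ² for the operator L with parameters (b₁, b₂, α₁, α₂, ι₁, ι₂). -/
noncomputable def Lop (a₁ a₂ α₁ α₂ κ₁ κ₂ : ℝ) (Φ : ℝ × ℝ → ℝ) (p : ℝ × ℝ) : ℝ :=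
  (a₁ * p.1 - α₁ * p.1 ^ 2 + p.2 ^ 2) * deriv (fun t => Φ (t, p.2)) p.1
    + (a₂ * p.2 - α₂ * p.1 * p.2) * deriv (fun t => Φ (p.1, t)) p.2
    + κ₁ * deriv (deriv (fun t => Φ (t, p.2))) p.1
    + κ₂ * deriv (deriv (fun t => Φ (p.1, t))) p.2

/-- `φ` is a Lyapunov function for the operator `L` (with the given parameters) on `U`:
(I) `φ` is `C^∞` on `U`; (II) `φ z → ∞` as `|z| → ∞`, `z ∈ U`;
(III) there are `C, D > 0` with `Lφ ≤ -C•φ + D` on `U`. -/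
def IsLyapunovOn (a₁ a₂ α₁ α₂ κ₁ κ₂ : ℝ) (φ : ℝ × ℝ → ℝ) (U : Set (ℝ × ℝ)) : Prop :=
  ContDiffOn ℝ (⊤ : ℕ∞) φ U ∧
    (∀ M : ℝ, ∃ R : ℝ, ∀ z ∈ U, R < ‖z‖ → M < φ z) ∧
    (∃ C > (0:ℝ), ∃ D > (0:ℝ), ∀ z ∈ U, Lop a₁ a₂ α₁ α₂ κ₁ κ₂ φ z ≤ -C * φ z + D)

lemma deriv_scale (g : ℝ → ℝ) (hg : Differentiable ℝ g) (c x : ℝ) :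
    deriv (fun t => g (t / c)) x = deriv g (x / c) / c := by
  have h1 : HasDerivAt (fun t : ℝ => t / c) (1 / c) x := by
    simpa using (hasDerivAt_id x).div_const c
  have h2 := ((hg (x / c)).hasDerivAt).comp x h1
  have := h2.deriv
  simpa [Function.comp_def, div_eq_mul_inv, mul_comm] using this

lemma deriv2_scale (g : ℝ → ℝ) (hg : ContDiff ℝ (⊤ : ℕ∞) g) (c x : ℝ) :
    deriv (deriv (fun t => g (t / c))) x = deriv (deriv g) (x / c) / c / c := by
  have hdg : Differentiable ℝ (deriv g) :=
    ((contDiff_infty_iff_deriv.mp hg).2).differentiable (by simp)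
  have hfun : deriv (fun t => g (t / c)) = fun s => deriv g (s / c) / c :=
    funext fun s => deriv_scale g (hg.differentiable (by simp)) c s
  rw [hfun]
  rw [show (fun s => deriv g (s / c) / c) = (fun s => (fun t => deriv g (t / c)) s / c) from rfl]
  rw [deriv_div_const, deriv_scale (deriv g) hdg c x]

lemma lop_scale (b₁ b₂ α₁ α₂ ι₁ ι₂ c : ℝ) (hc : c ≠ 0) (Φ : ℝ × ℝ → ℝ)
    (hΦ : ContDiff ℝ (⊤ : ℕ∞) Φ) (p : ℝ × ℝ) :
    Lop b₁ b₂ α₁ α₂ ι₁ ι₂ (fun q => Φ (q.1 / c, q.2 / c)) p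
      = c * Lop (b₁ / c) (b₂ / c) α₁ α₂ (ι₁ / c ^ 3) (ι₂ / c ^ 3) Φ (p.1 / c, p.2 / c) := by
  obtain ⟨x, y⟩ := p
  have hgx : ContDiff ℝ (⊤ : ℕ∞) (fun t => Φ (t, y / c)) :=
    hΦ.comp (contDiff_id.prodMk contDiff_const)
  have hgy : ContDiff ℝ (⊤ : ℕ∞) (fun t => Φ (x / c, t)) :=
    hΦ.comp (contDiff_const.prodMk contDiff_id)
  simp only [Lop]
  rw [show (fun t => (fun q : ℝ × ℝ => Φ (q.1 / c, q.2 / c)) (t, y))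
      = (fun t => (fun s => Φ (s, y / c)) (t / c)) from rfl,
    show (fun t => (fun q : ℝ × ℝ => Φ (q.1 / c, q.2 / c)) (x, t))
      = (fun t => (fun s => Φ (x / c, s)) (t / c)) from rfl,
    deriv_scale _ (hgx.differentiable (by simp)), deriv_scale _ (hgy.differentiable (by simp)),
    deriv2_scale _ hgx, deriv2_scale _ hgy]
  field_simp

/-- reduction of parameters. -/
theorem statement1 (α₁ α₂ : ℝ) (hα₁ : 0 < α₁) (hα : α₁ < α₂)
    (h : ∃ κ₂ > (0:ℝ), ∀ a₁ a₂ : ℝ, ∀ κ₁ ≥ (0:ℝ),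
      ∃ Φ : ℝ × ℝ → ℝ, IsLyapunovOn a₁ a₂ α₁ α₂ κ₁ κ₂ Φ Set.univ) :
    ∀ b₁ b₂ : ℝ, ∀ ι₁ ≥ (0:ℝ), ∀ ι₂ > (0:ℝ),
      ∃ Φ : ℝ × ℝ → ℝ, IsLyapunovOn b₁ b₂ α₁ α₂ ι₁ ι₂ Φ Set.univ := by
  obtain ⟨κ₂, hκ₂, H⟩ := h
  intro b₁ b₂ ι₁ hι₁ ι₂ hι₂
  set c : ℝ := (ι₂ / κ₂) ^ ((1 : ℝ) / 3) with hcdef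
  have hr : (0 : ℝ) < ι₂ / κ₂ := div_pos hι₂ hκ₂
  have hc : 0 < c := Real.rpow_pos_of_pos hr _
  have hc' : c ≠ 0 := ne_of_gt hc
  have hc3 : c ^ 3 = ι₂ / κ₂ := by
    rw [hcdef, ← Real.rpow_natCast ((ι₂ / κ₂) ^ ((1:ℝ)/3)) 3, ← Real.rpow_mul hr.le]
    norm_num
  have hκeq : ι₂ / c ^ 3 = κ₂ := by
    rw [hc3]
    field_simp
  have hκ₁' : ι₁ / c ^ 3 ≥ 0 := div_nonneg hι₁ (by positivity)
  obtain ⟨Φ, hΦ₁, hΦ₂, C, hC, D, hD, hΦ₃⟩ := H (b₁ / c) (b₂ / c) (ι₁ / c ^ 3) hκ₁'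
  have hΦs : ContDiff ℝ (⊤ : ℕ∞) Φ := contDiffOn_univ.mp hΦ₁
  refine ⟨fun q => Φ (q.1 / c, q.2 / c), ?_, ?_, ?_⟩
  · rw [contDiffOn_univ]
    exact hΦs.comp ((contDiff_fst.div_const c).prodMk (contDiff_snd.div_const c))
  · intro M
    obtain ⟨R, hR⟩ := hΦ₂ M
    refine ⟨c * R, fun z _ hz => ?_⟩
    apply hR (z.1 / c, z.2 / c) (Set.mem_univ _)
    have hnorm : ‖((z.1 / c, z.2 / c) : ℝ × ℝ)‖ = ‖z‖ / c := by
      have : ((z.1 / c, z.2 / c) : ℝ × ℝ) = c⁻¹ • z := by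
        simp [Prod.smul_def, div_eq_inv_mul]
      rw [this, norm_smul]
      simp [abs_of_pos (inv_pos.mpr hc), abs_of_pos hc, inv_mul_eq_div]
    rw [hnorm]
    rw [lt_div_iff₀ hc]
    linarith [hz]
  · refine ⟨c * C, mul_pos hc hC, c * D, mul_pos hc hD, fun z _ => ?_⟩
    rw [show ι₂ = ι₂ from rfl]
    have key := lop_scale b₁ b₂ α₁ α₂ ι₁ ι₂ c hc' Φ hΦs z
    rw [hκeq] at key
    rw [key]
    have h3 := hΦ₃ (z.1 / c, z.2 / c) (Set.mem_univ _)
    nlinarith [mul_le_mul_of_nonneg_left h3 hc.le]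
end

section
/- Let a₁, a₂ ∈ ℝ, 0 < α₁ < α₂, κ₁ ≥ 0 and 0 < κ₂ < 4α₁. Set σ = (α₁+α₂)/(2α₂), δ = κ₂/(8α₁), β = (2+σ)δ, C₁ = 2, and define φ₁(x,y) = C₁(5|x|^β − y²|x|^{β+1}) on U₁ = {(x,y) : x < −2 and |y| < 2|x|^{−1/2}}. Then φ₁ is a Lyapunov function for L on U₁; in fact φ₁(x,y) > C₁|x|^β on U₁, φ₁(z) → ∞ as |z| → ∞ with z ∈ U₁, and there exists a constant D₁ > 0 such that (Lφ₁)(x,y) ≤ −(κ₂/80)·φ₁(x,y) + D₁ for all (x,y) ∈ U₁. -/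
noncomputable def phi1 (β : ℝ) (p : ℝ × ℝ) : ℝ :=
  2 * (5 * |p.1| ^ β - p.2 ^ 2 * |p.1| ^ (β + 1))

def U1 : Set (ℝ × ℝ) := {p : ℝ × ℝ | p.1 < -2 ∧ |p.2| < 2 * |p.1| ^ (-(1:ℝ)/2)}

/-! ### Auxiliary lemmas -/

lemma ev_neg {x : ℝ} (hx : x < 0) : ∀ᶠ t in nhds x, t < 0 :=
  isOpen_Iio.eventually_mem hx

lemma hasDeriv_pow_neg {x c : ℝ} (hx : x < 0) :
    HasDerivAt (fun t : ℝ => (-t) ^ c) (-(c * (-x) ^ (c - 1))) x := by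
  have h1 : HasDerivAt (fun t : ℝ => -t) (-1) x := (hasDerivAt_id x).neg
  have h2 := h1.rpow_const (p := c) (Or.inl (by simp; linarith))
  convert h2 using 1
  ring

lemma hasDeriv_x {β y x : ℝ} (hx : x < 0) :
    HasDerivAt (fun t => phi1 β (t, y))
      (2 * (-(5 * β * (-x) ^ (β - 1)) + (β + 1) * y ^ 2 * (-x) ^ β)) x := by
  have h1 := (hasDeriv_pow_neg (c := β) hx).const_mul 5
  have h2 := (hasDeriv_pow_neg (c := β + 1) hx).const_mul (y ^ 2)
  have h3 := ((h1.sub h2).const_mul 2)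
  have h4 : HasDerivAt (fun t => 2 * (5 * (-t) ^ β - y ^ 2 * (-t) ^ (β + 1)))
      (2 * (-(5 * β * (-x) ^ (β - 1)) + (β + 1) * y ^ 2 * (-x) ^ β)) x := by
    refine h3.congr_deriv ?_
    rw [show β + 1 - 1 = β by ring]; ring
  exact h4.congr_of_eventuallyEq <| (ev_neg hx).mono fun t ht => by
    simp [phi1, abs_of_neg ht]

lemma deriv_x {β y x : ℝ} (hx : x < 0) :
    deriv (fun t => phi1 β (t, y)) x
      = 2 * (-(5 * β * (-x) ^ (β - 1)) + (β + 1) * y ^ 2 * (-x) ^ β) :=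
  (hasDeriv_x hx).deriv

lemma deriv2_x {β y x : ℝ} (hx : x < 0) :
    deriv (deriv (fun t => phi1 β (t, y))) x
      = 2 * (5 * β * (β - 1) * (-x) ^ (β - 2) - (β + 1) * β * y ^ 2 * (-x) ^ (β - 1)) := by
  have hev : deriv (fun t => phi1 β (t, y))
      =ᶠ[nhds x] fun t => 2 * (-(5 * β * (-t) ^ (β - 1)) + (β + 1) * y ^ 2 * (-t) ^ β) :=
    (ev_neg hx).mono fun t ht => deriv_x ht
  rw [hev.deriv_eq]
  have h1 := (hasDeriv_pow_neg (c := β - 1) hx).const_mul (5 * β)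
  have h2 := (hasDeriv_pow_neg (c := β) hx).const_mul ((β + 1) * y ^ 2)
  have h3 := ((h1.neg.add h2).const_mul 2)
  have h4 : HasDerivAt (fun t => 2 * (-(5 * β * (-t) ^ (β - 1)) + (β + 1) * y ^ 2 * (-t) ^ β))
      (2 * (5 * β * (β - 1) * (-x) ^ (β - 2) - (β + 1) * β * y ^ 2 * (-x) ^ (β - 1))) x := by
    refine h3.congr_deriv ?_
    rw [show β - 1 - 1 = β - 2 by ring]; ring
  exact h4.deriv

lemma deriv_y {β y x : ℝ} :
    deriv (fun t => phi1 β (x, t)) y = -4 * y * |x| ^ (β + 1) := by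
  have h : HasDerivAt (fun t : ℝ => 2 * (5 * |x| ^ β - t ^ 2 * |x| ^ (β + 1)))
      (-4 * y * |x| ^ (β + 1)) y := by
    have h1 := ((hasDerivAt_pow 2 y).mul_const (|x| ^ (β + 1))).const_sub (5 * |x| ^ β)
    have h2 := h1.const_mul 2
    refine h2.congr_deriv ?_
    push_cast; ring
  exact h.congr_of_eventuallyEq (by filter_upwards with t; simp [phi1]) |>.deriv

lemma deriv2_y {β y x : ℝ} :
    deriv (deriv (fun t => phi1 β (x, t))) y = -4 * |x| ^ (β + 1) := by
  have hev : deriv (fun t => phi1 β (x, t)) = fun t => -4 * t * |x| ^ (β + 1) :=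
    funext fun t => deriv_y
  rw [hev]
  have h : HasDerivAt (fun t : ℝ => -4 * t * |x| ^ (β + 1)) (-4 * |x| ^ (β + 1)) y := by
    have := ((hasDerivAt_id y).const_mul (-4)).mul_const (|x| ^ (β + 1))
    refine this.congr_deriv ?_; ring
  exact h.deriv

lemma lop_eq (a₁ a₂ α₁ α₂ κ₁ κ₂ β x y : ℝ) (hx : x < 0) :
    Lop a₁ a₂ α₁ α₂ κ₁ κ₂ (phi1 β) (x, y)
      = (a₁ * x - α₁ * x ^ 2 + y ^ 2)
          * (2 * (-(5 * β * (-x) ^ (β - 1)) + (β + 1) * y ^ 2 * (-x) ^ β))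
        + (a₂ * y - α₂ * x * y) * (-4 * y * (-x) ^ (β + 1))
        + κ₁ * (2 * (5 * β * (β - 1) * (-x) ^ (β - 2) - (β + 1) * β * y ^ 2 * (-x) ^ (β - 1)))
        + κ₂ * (-4 * (-x) ^ (β + 1)) := by
  have hax : |x| = -x := abs_of_neg hx
  simp only [Lop, deriv_x hx, deriv2_x hx, deriv_y, deriv2_y, hax]

lemma phi1_smooth {β : ℝ} : ContDiffOn ℝ (⊤ : ℕ∞) (phi1 β) {p : ℝ × ℝ | p.1 < 0} := by
  intro p hp
  have hp1 : p.1 < 0 := hp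
  have hne : -p.1 ≠ 0 := ne_of_gt (by linarith)
  have h1 : ContDiffAt ℝ (⊤ : ℕ∞) (fun q : ℝ × ℝ => (-q.1) ^ β) p :=
    (contDiff_fst.neg.contDiffAt).rpow_const_of_ne hne
  have h2 : ContDiffAt ℝ (⊤ : ℕ∞) (fun q : ℝ × ℝ => (-q.1) ^ (β + 1)) p :=
    (contDiff_fst.neg.contDiffAt).rpow_const_of_ne hne
  have hsq : ContDiffAt ℝ (⊤ : ℕ∞) (fun q : ℝ × ℝ => q.2 ^ 2) p :=
    (contDiff_snd.pow 2).contDiffAt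
  have h : ContDiffAt ℝ (⊤ : ℕ∞)
      (fun q : ℝ × ℝ => 2 * (5 * (-q.1) ^ β - q.2 ^ 2 * (-q.1) ^ (β + 1))) p :=
    contDiffAt_const.mul ((contDiffAt_const.mul h1).sub (hsq.mul h2))
  have hev : ∀ᶠ q : ℝ × ℝ in nhds p, q.1 < 0 :=
    (isOpen_lt continuous_fst continuous_const).eventually_mem hp1
  exact (h.congr_of_eventuallyEq (hev.mono fun q hq => by
    simp [phi1, abs_of_neg hq])).contDiffWithinAt

lemma sq_bound {x y : ℝ} (hx : x < -2) (hy : |y| < 2 * |x| ^ (-(1:ℝ)/2)) :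
    y ^ 2 * |x| < 4 := by
  have h0 : (0:ℝ) < |x| := by rw [abs_of_neg (by linarith)]; linarith
  have h1 : |y| * |y| < (2 * |x| ^ (-(1:ℝ)/2)) * (2 * |x| ^ (-(1:ℝ)/2)) :=
    mul_lt_mul'' hy hy (abs_nonneg y) (abs_nonneg y)
  have h2 : |x| ^ (-(1:ℝ)/2) * |x| ^ (-(1:ℝ)/2) = |x| ^ (-(1:ℝ)) := by
    rw [← Real.rpow_add h0]; norm_num
  have h3 : y ^ 2 < 4 * |x| ^ (-(1:ℝ)) := by
    have hyy : y ^ 2 = |y| * |y| := by rw [abs_mul_abs_self]; ring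
    rw [hyy]
    calc |y| * |y| < (2 * |x| ^ (-(1:ℝ)/2)) * (2 * |x| ^ (-(1:ℝ)/2)) := h1
      _ = 4 * (|x| ^ (-(1:ℝ)/2) * |x| ^ (-(1:ℝ)/2)) := by ring
      _ = 4 * |x| ^ (-(1:ℝ)) := by rw [h2]
  rw [Real.rpow_neg_one] at h3
  have h5 : |x|⁻¹ * |x| = 1 := inv_mul_cancel₀ (ne_of_gt h0)
  nlinarith [mul_lt_mul_of_pos_right h3 h0, h5]

lemma phi1_lower {β : ℝ} {p : ℝ × ℝ} (hx : p.1 < -2) (hy : |p.2| < 2 * |p.1| ^ (-(1:ℝ)/2)) :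
    2 * |p.1| ^ β < phi1 β p := by
  have h0 : (0:ℝ) < |p.1| := by rw [abs_of_neg (by linarith)]; linarith
  have hy2 : p.2 ^ 2 * |p.1| < 4 := sq_bound hx hy
  have hsplit : |p.1| ^ (β + 1) = |p.1| ^ β * |p.1| := by
    rw [Real.rpow_add h0, Real.rpow_one]
  have hvpos : 0 < |p.1| ^ β := Real.rpow_pos_of_pos h0 β
  simp only [phi1]
  rw [hsplit]
  nlinarith [mul_pos hvpos (show (0:ℝ) < 4 - p.2 ^ 2 * |p.1| by linarith)]

lemma phi1_coercive {β : ℝ} (hβ : 0 < β) (M : ℝ) :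
    ∃ R : ℝ, ∀ z ∈ U1, R < ‖z‖ → M < phi1 β z := by
  refine ⟨max 2 ((max M 1) ^ β⁻¹), fun z hz hR => ?_⟩
  obtain ⟨hz1, hz2⟩ := hz
  have h2R : 2 < ‖z‖ := lt_of_le_of_lt (le_max_left _ _) hR
  have hx2 : 2 < |z.1| := by rw [abs_of_neg (by linarith)]; linarith
  have hx1 : |z.1| ^ (-(1:ℝ)/2) ≤ 1 :=
    Real.rpow_le_one_of_one_le_of_nonpos (by linarith) (by norm_num)
  have hz2' : |z.2| < 2 := lt_of_lt_of_le hz2 (by nlinarith)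
  have hnz : ‖z‖ ≤ |z.1| := by
    rw [Prod.norm_def]
    simp only [Real.norm_eq_abs]
    exact max_le le_rfl (by linarith)
  have hM1 : (0:ℝ) < max M 1 := lt_of_lt_of_le one_pos (le_max_right M 1)
  have hMle : (max M 1) ^ β⁻¹ < |z.1| := by
    have := le_max_right (2:ℝ) ((max M 1) ^ β⁻¹)
    linarith
  have hpow : max M 1 < |z.1| ^ β := by
    have h := Real.rpow_lt_rpow (Real.rpow_nonneg hM1.le _) hMle hβ
    rwa [← Real.rpow_mul hM1.le, inv_mul_cancel₀ (ne_of_gt hβ), Real.rpow_one] at h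
  have hlow := phi1_lower (β := β) hz1 hz2
  have hvpos : 0 < |z.1| ^ β := Real.rpow_pos_of_pos (by linarith) β
  calc M ≤ max M 1 := le_max_left _ _
    _ < |z.1| ^ β := hpow
    _ ≤ 2 * |z.1| ^ β := by linarith
    _ < phi1 β z := hlow

set_option maxHeartbeats 2000000 in
lemma key_drift (a₁ a₂ α₁ α₂ κ₁ κ₂ β : ℝ) (hα₁ : 0 < α₁) (hα₂ : 0 < α₂) (hκ₁ : 0 ≤ κ₁)
    (hκ₂ : 0 < κ₂) (hβpos : 0 < β) (hβ4 : 10 * α₁ * β ≤ 15/4 * κ₂) :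
    ∃ D₁ > (0:ℝ), ∀ x y : ℝ, x < -2 → |y| < 2 * |x| ^ (-(1:ℝ)/2) →
      Lop a₁ a₂ α₁ α₂ κ₁ κ₂ (phi1 β) (x, y) ≤ -(κ₂ / 80) * phi1 β (x, y) + D₁ := by
  have hκ₂0 : κ₂ ≠ 0 := ne_of_gt hκ₂
  have hb1 : (0:ℝ) < β + 1 := by linarith
  obtain ⟨K, hK_def⟩ : ∃ K : ℝ, K = 10 * |a₁| * β + 8 * |a₁| * (β + 1) + 8 * (β + 1)
      + 16 * |a₂| + 10 * κ₁ * β * |β - 1| + κ₂ / 8 := ⟨_, rfl⟩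
  have c9 : (0:ℝ) ≤ 10 * κ₁ * β :=
    mul_nonneg (mul_nonneg (by norm_num) hκ₁) hβpos.le
  have hK0 : 0 < K := by
    have q1 : 0 ≤ 10 * |a₁| * β := mul_nonneg (by positivity) hβpos.le
    have q2 : 0 ≤ 8 * |a₁| * (β + 1) := mul_nonneg (by positivity) hb1.le
    have q3 : 0 ≤ 10 * κ₁ * β * |β - 1| := mul_nonneg c9 (abs_nonneg _)
    have q4 : 0 ≤ 16 * |a₂| := by positivity
    rw [hK_def]; linarith
  have hRpos : (0:ℝ) < 2 + 4 * K / κ₂ := by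
    have := div_pos (by linarith : (0:ℝ) < 4 * K) hκ₂
    linarith
  have hrp := Real.rpow_pos_of_pos hRpos β
  refine ⟨K * (2 + 4 * K / κ₂) ^ β + 1, by linarith only [mul_pos hK0 hrp],
    fun x y hx hy => ?_⟩
  obtain ⟨r, rfl⟩ : ∃ r, x = -r := ⟨-x, (neg_neg x).symm⟩
  have hr : 2 < r := by linarith [hx]
  have hr0 : (0:ℝ) < r := by linarith
  have hax : |(-r : ℝ)| = r := by rw [abs_neg, abs_of_pos hr0]
  rw [hax] at hy
  have hy2 : y ^ 2 * r < 4 := by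
    have h := sq_bound (x := -r) (y := y) hx (by rwa [hax])
    rwa [hax] at h
  have hE2 : y ^ 2 < 2 := by
    linarith only [hy2, mul_nonneg (sq_nonneg y) (by linarith only [hr] : (0:ℝ) ≤ r - 2)]
  rw [lop_eq a₁ a₂ α₁ α₂ κ₁ κ₂ β (-r) y (by linarith)]
  have hphi : phi1 β (-r, y) = 2 * (5 * r ^ β - y ^ 2 * r ^ (β + 1)) := by
    simp [phi1, abs_neg, abs_of_pos hr0]
  rw [hphi]
  simp only [neg_neg]
  have e1 : r ^ (β - 1) = r ^ (β - 2) * r := by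
    have h : r ^ (β - 2 + 1) = r ^ (β - 2) * r := by
      rw [Real.rpow_add hr0, Real.rpow_one]
    rw [← h]; congr 1; ring
  have e2 : r ^ β = r ^ (β - 2) * r * r := by
    have h : r ^ (β - 2 + 1 + 1) = r ^ (β - 2) * r * r := by
      rw [Real.rpow_add hr0, Real.rpow_add hr0, Real.rpow_one]
    rw [← h]; congr 1; ring
  have e3 : r ^ (β + 1) = r ^ (β - 2) * r * r * r := by
    have h : r ^ (β - 2 + 1 + 1 + 1) = r ^ (β - 2) * r * r * r := by
      rw [Real.rpow_add hr0, Real.rpow_add hr0, Real.rpow_add hr0, Real.rpow_one]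
    rw [← h]; congr 1; ring
  rw [e1, e2, e3]
  obtain ⟨A, hA_def⟩ : ∃ A : ℝ, A = r ^ (β - 2) := ⟨_, rfl⟩
  rw [← hA_def]
  rw [← hA_def] at e2
  have hv0 : 0 < A := by rw [hA_def]; exact Real.rpow_pos_of_pos hr0 _
  have p1 : 0 < A * r := mul_pos hv0 hr0
  have p2 : 0 < A * r * r := mul_pos p1 hr0
  have p3 : 0 < A * r * r * r := mul_pos p2 hr0
  have p4 : 0 < A * r * r * r * r := mul_pos p3 hr0
  have h2b : (0:ℝ) ≤ 2 * (β + 1) * (A * r * r) :=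
    mul_nonneg (mul_nonneg (by norm_num) hb1.le) p2.le
  have hy2r : (0:ℝ) ≤ y ^ 2 * r := mul_nonneg (sq_nonneg y) hr0.le
  -- individual bounds
  have g1 : 10 * a₁ * β * (A * r * r) ≤ 10 * |a₁| * β * (A * r * r) := by
    linarith only [mul_le_mul_of_nonneg_right (le_abs_self a₁)
      (mul_nonneg (by linarith only [hβpos] : (0:ℝ) ≤ 10 * β) p2.le)]
  have habs1 : (-a₁) * (y ^ 2 * r) ≤ |a₁| * 4 := by
    calc (-a₁) * (y ^ 2 * r) ≤ |a₁| * (y ^ 2 * r) :=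
          mul_le_mul_of_nonneg_right (neg_le_abs a₁) hy2r
      _ ≤ |a₁| * 4 := mul_le_mul_of_nonneg_left hy2.le (abs_nonneg a₁)
  have g2 : -2 * a₁ * (β + 1) * y ^ 2 * (A * r * r * r)
      ≤ 8 * |a₁| * (β + 1) * (A * r * r) := by
    linarith only [mul_le_mul_of_nonneg_right habs1 h2b]
  have g3 : 10 * α₁ * β * (A * r * r * r) - 4 * κ₂ * (A * r * r * r)
      ≤ -(κ₂ / 4) * (A * r * r * r) := by
    linarith only [mul_le_mul_of_nonneg_right hβ4 p3.le]
  have c4 : (0:ℝ) ≤ 2 * α₁ * (β + 1) :=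
    mul_nonneg (by linarith only [hα₁]) hb1.le
  have g4 : 0 ≤ 2 * α₁ * (β + 1) * y ^ 2 * (A * r * r * r * r) :=
    mul_nonneg (mul_nonneg c4 (sq_nonneg y)) p4.le
  have g5 : 0 ≤ 10 * β * y ^ 2 * (A * r) :=
    mul_nonneg (mul_nonneg (by linarith only [hβpos]) (sq_nonneg y)) p1.le
  have hy4 : y ^ 2 * y ^ 2 ≤ 4 := by
    linarith only [mul_le_mul hE2.le hE2.le (sq_nonneg y) (by norm_num : (0:ℝ) ≤ 2)]
  have g6 : 2 * (β + 1) * (y ^ 2 * y ^ 2) * (A * r * r) ≤ 8 * (β + 1) * (A * r * r) := by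
    linarith only [mul_le_mul_of_nonneg_right hy4 h2b]
  have habs2 : (-a₂) * (y ^ 2 * r) ≤ |a₂| * 4 := by
    calc (-a₂) * (y ^ 2 * r) ≤ |a₂| * (y ^ 2 * r) :=
          mul_le_mul_of_nonneg_right (neg_le_abs a₂) hy2r
      _ ≤ |a₂| * 4 := mul_le_mul_of_nonneg_left hy2.le (abs_nonneg a₂)
  have g7 : -4 * a₂ * y ^ 2 * (A * r * r * r) ≤ 16 * |a₂| * (A * r * r) := by
    linarith only [mul_le_mul_of_nonneg_right habs2
      (by linarith only [p2] : (0:ℝ) ≤ 4 * (A * r * r))]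
  have g8 : 0 ≤ 4 * α₂ * y ^ 2 * (A * r * r * r * r) :=
    mul_nonneg (mul_nonneg (by linarith only [hα₂]) (sq_nonneg y)) p4.le
  have g9 : 10 * κ₁ * β * (β - 1) * A ≤ 10 * κ₁ * β * |β - 1| * (A * r * r) := by
    have h9a := mul_le_mul_of_nonneg_right
      (mul_le_mul_of_nonneg_left (le_abs_self (β - 1)) c9) hv0.le
    have hrr : (1:ℝ) ≤ r * r := by nlinarith [hr, hr0]
    have hAA : A ≤ A * r * r := by
      linarith only [mul_le_mul_of_nonneg_left hrr hv0.le]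
    have h9b : 10 * κ₁ * β * |β - 1| * A ≤ 10 * κ₁ * β * |β - 1| * (A * r * r) :=
      mul_le_mul_of_nonneg_left hAA (mul_nonneg c9 (abs_nonneg _))
    linarith only [h9a, h9b]
  have g10 : 0 ≤ 2 * κ₁ * β * (β + 1) * y ^ 2 * (A * r) :=
    mul_nonneg (mul_nonneg
      (mul_nonneg (mul_nonneg (mul_nonneg (by norm_num) hκ₁) hβpos.le) hb1.le)
      (sq_nonneg y)) p1.le
  have g11 : 0 ≤ κ₂ / 40 * (y ^ 2 * (A * r * r * r)) :=
    mul_nonneg (by linarith only [hκ₂]) (mul_nonneg (sq_nonneg y) p3.le)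
  -- final constant bound
  have gK : K * (A * r * r) - κ₂ / 4 * (A * r * r * r) ≤ K * (2 + 4 * K / κ₂) ^ β + 1 := by
    rcases le_or_gt r (2 + 4 * K / κ₂) with h | h
    · have hvb : r ^ β ≤ (2 + 4 * K / κ₂) ^ β := Real.rpow_le_rpow hr0.le h hβpos.le
      have h1 : K * (A * r * r) ≤ K * (2 + 4 * K / κ₂) ^ β := by
        rw [← e2]; exact mul_le_mul_of_nonneg_left hvb hK0.le
      have h2 : (0:ℝ) ≤ κ₂ / 4 * (A * r * r * r) :=
        mul_nonneg (by linarith only [hκ₂]) p3.le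
      linarith only [h1, h2]
    · have hq : κ₂ / 4 * (2 + 4 * K / κ₂) = κ₂ / 2 + K := by
        field_simp; ring
      have hstep := mul_lt_mul_of_pos_left h (show (0:ℝ) < κ₂ / 4 by linarith only [hκ₂])
      have h2 : K < κ₂ / 4 * r := by linarith only [hq, hstep, hκ₂]
      linarith only [mul_lt_mul_of_pos_left h2 p2, mul_pos hK0 hrp]
  have gK' : (10 * |a₁| * β + 8 * |a₁| * (β + 1) + 8 * (β + 1) + 16 * |a₂|
        + 10 * κ₁ * β * |β - 1| + κ₂ / 8) * (A * r * r) - κ₂ / 4 * (A * r * r * r)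
      ≤ K * (2 + 4 * K / κ₂) ^ β + 1 := by
    rw [← hK_def]; exact gK
  linarith only [g1, g2, g3, g4, g5, g6, g7, g8, g9, g10, g11, gK']

/-- `φ₁` is a Lyapunov function on `U₁` (with `C₁ = 2`). -/
theorem statement2 (a₁ a₂ α₁ α₂ κ₁ κ₂ σ δ β : ℝ)
    (hα₁ : 0 < α₁) (hα : α₁ < α₂) (hκ₁ : 0 ≤ κ₁) (hκ₂ : 0 < κ₂) (hκ₂' : κ₂ < 4 * α₁)
    (hσ : σ = (α₁ + α₂) / (2 * α₂)) (hδ : δ = κ₂ / (8 * α₁)) (hβ : β = (2 + σ) * δ) :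
    IsLyapunovOn a₁ a₂ α₁ α₂ κ₁ κ₂ (phi1 β) U1 ∧
      (∀ p ∈ U1, 2 * |p.1| ^ β < phi1 β p) ∧
      (∀ M : ℝ, ∃ R : ℝ, ∀ z ∈ U1, R < ‖z‖ → M < phi1 β z) ∧
      ∃ D₁ > (0:ℝ), ∀ p ∈ U1,
        Lop a₁ a₂ α₁ α₂ κ₁ κ₂ (phi1 β) p ≤ -(κ₂ / 80) * phi1 β p + D₁ := by
  have hα₂ : 0 < α₂ := by linarith
  have hσ0 : 0 < σ := by rw [hσ]; exact div_pos (by linarith) (by linarith)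
  have hσ1 : σ ≤ 1 := by
    rw [hσ, div_le_one (by linarith)]; linarith
  have hδ0 : 0 < δ := by rw [hδ]; exact div_pos hκ₂ (by linarith)
  have hβpos : 0 < β := by rw [hβ]; exact mul_pos (by linarith) hδ0
  have hβ4 : 10 * α₁ * β ≤ 15/4 * κ₂ := by
    have hα₁' : α₁ ≠ 0 := ne_of_gt hα₁
    have heq : 10 * α₁ * ((2 + σ) * (κ₂ / (8 * α₁))) = 5/4 * (2 + σ) * κ₂ := by
      field_simp; ring
    rw [hβ, hδ, heq]
    nlinarith [mul_nonneg (show (0:ℝ) ≤ 1 - σ by linarith) hκ₂.le]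
  obtain ⟨D₁, hD₁, hdrift⟩ := key_drift a₁ a₂ α₁ α₂ κ₁ κ₂ β hα₁ hα₂ hκ₁ hκ₂ hβpos hβ4
  have hsmooth : ContDiffOn ℝ (⊤ : ℕ∞) (phi1 β) U1 :=
    phi1_smooth.mono fun p hp => lt_trans hp.1 (by norm_num)
  have hdrift' : ∀ p ∈ U1, Lop a₁ a₂ α₁ α₂ κ₁ κ₂ (phi1 β) p
      ≤ -(κ₂ / 80) * phi1 β p + D₁ := fun p hp => hdrift p.1 p.2 hp.1 hp.2
  exact ⟨⟨hsmooth, phi1_coercive hβpos, κ₂ / 80, by linarith, D₁, hD₁, hdrift'⟩,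
    fun p hp => phi1_lower hp.1 hp.2, phi1_coercive hβpos, D₁, hD₁, hdrift'⟩
end

section
/- Let a₁, a₂, α₁, α₂ ∈ ℝ and κ₂ > 0. Define the smooth vector fields on ℝ²: X₀(x,y) = (a₁x − α₁x² + y², a₂y − α₂xy) and X₂(x,y) = (0, √κ₂). Then the iterated Lie bracket [X₂, [X₂, X₀]] is the constant vector field (x,y) ↦ (2κ₂, 0); in particular, for every z ∈ ℝ², the vectors X₂(z) and [X₂,[X₂,X₀]](z) span ℝ². -/
/-- The Lie bracket of two smooth vector fields on `ℝ²`: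
`[V,W](z) = DW(z)(V(z)) − DV(z)(W(z))`. -/
noncomputable def lieBracket (V W : ℝ × ℝ → ℝ × ℝ) (z : ℝ × ℝ) : ℝ × ℝ :=
  fderiv ℝ W z (V z) - fderiv ℝ V z (W z)

/-- The drift vector field `X₀`. -/
def X0 (a₁ a₂ α₁ α₂ : ℝ) (z : ℝ × ℝ) : ℝ × ℝ :=
  (a₁ * z.1 - α₁ * z.1 ^ 2 + z.2 ^ 2, a₂ * z.2 - α₂ * z.1 * z.2)

/-- The noise vector field `X₂ = √κ₂ ∂_y`. -/
noncomputable def X2 (κ₂ : ℝ) (_ : ℝ × ℝ) : ℝ × ℝ := (0, Real.sqrt κ₂)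

lemma fderivX2 (κ₂ : ℝ) (z : ℝ × ℝ) : fderiv ℝ (X2 κ₂) z = 0 :=
  fderiv_const_apply _

lemma B1_eq (a₁ a₂ α₁ α₂ κ₂ : ℝ) :
    lieBracket (X2 κ₂) (X0 a₁ a₂ α₁ α₂)
      = fun z : ℝ × ℝ => (2 * z.2 * Real.sqrt κ₂, (a₂ - α₂ * z.1) * Real.sqrt κ₂) := by
  funext z
  have hX : X0 a₁ a₂ α₁ α₂ =
      fun z : ℝ × ℝ => (a₁ * z.1 - α₁ * (z.1 * z.1) + z.2 * z.2,
        a₂ * z.2 - α₂ * z.1 * z.2) := by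
    funext w; simp [X0, pow_two]
  have hf : HasFDerivAt (fun z : ℝ × ℝ => (a₁ * z.1 - α₁ * (z.1 * z.1) + z.2 * z.2,
        a₂ * z.2 - α₂ * z.1 * z.2)) _ z := HasFDerivAt.prodMk ((((hasFDerivAt_fst (𝕜 := ℝ) (p := z)).const_mul a₁).sub
      (((hasFDerivAt_fst (𝕜 := ℝ) (p := z)).mul (hasFDerivAt_fst (𝕜 := ℝ) (p := z))).const_mul α₁)).add
      ((hasFDerivAt_snd (𝕜 := ℝ) (p := z)).mul (hasFDerivAt_snd (𝕜 := ℝ) (p := z))))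
      ((((hasFDerivAt_snd (𝕜 := ℝ) (p := z)).const_mul a₂)).sub
      (((hasFDerivAt_fst (𝕜 := ℝ) (p := z)).const_mul α₂).mul (hasFDerivAt_snd (𝕜 := ℝ) (p := z))))
  rw [lieBracket, hX, hf.fderiv, fderivX2]
  simp [X2, Prod.ext_iff]
  constructor <;> ring

lemma B2_eq (a₁ a₂ α₁ α₂ κ₂ : ℝ) (hκ₂ : 0 ≤ κ₂) :
    lieBracket (X2 κ₂) (lieBracket (X2 κ₂) (X0 a₁ a₂ α₁ α₂))
      = fun _ : ℝ × ℝ => ((2 * κ₂, 0) : ℝ × ℝ) := by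
  funext z
  have hg : HasFDerivAt (fun z : ℝ × ℝ => (2 * z.2 * Real.sqrt κ₂, (a₂ - α₂ * z.1) * Real.sqrt κ₂)) _ z := HasFDerivAt.prodMk (((hasFDerivAt_snd (𝕜 := ℝ) (p := z)).const_mul 2).mul_const (Real.sqrt κ₂))
    (((hasFDerivAt_const (𝕜 := ℝ) (x := z) a₂).sub
      ((hasFDerivAt_fst (𝕜 := ℝ) (p := z)).const_mul α₂)).mul_const (Real.sqrt κ₂))
  rw [lieBracket, B1_eq, hg.fderiv, fderivX2]
  simp [X2, Prod.ext_iff, Real.mul_self_sqrt hκ₂]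
  ring_nf
  rw [Real.sq_sqrt hκ₂]

/-- `[X₂,[X₂,X₀]]` is the constant vector field `(2κ₂, 0)`, and together with
`X₂` it spans `ℝ²` at every point. -/
theorem statement11 (a₁ a₂ α₁ α₂ κ₂ : ℝ) (hκ₂ : 0 < κ₂) :
    (lieBracket (X2 κ₂) (lieBracket (X2 κ₂) (X0 a₁ a₂ α₁ α₂))
        = fun _ : ℝ × ℝ => ((2 * κ₂, 0) : ℝ × ℝ)) ∧
      ∀ z : ℝ × ℝ,
        Submodule.span ℝ
          ({X2 κ₂ z, lieBracket (X2 κ₂) (lieBracket (X2 κ₂) (X0 a₁ a₂ α₁ α₂)) z} :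
            Set (ℝ × ℝ)) = ⊤ := by
  have hB := B2_eq a₁ a₂ α₁ α₂ κ₂ hκ₂.le
  refine ⟨hB, fun z => ?_⟩
  rw [hB]
  rw [Submodule.eq_top_iff']
  intro v
  rw [Submodule.mem_span_pair]
  have hs : Real.sqrt κ₂ ≠ 0 := by positivity
  refine ⟨v.2 / Real.sqrt κ₂, v.1 / (2 * κ₂), ?_⟩
  simp [X2, Prod.ext_iff]
  constructor
  · field_simp
  · field_simp
end

section
/- Let a₁, a₂ ∈ ℝ, 0 < α₁ < α₂, κ₁ ≥ 0 and κ₂ > 0. For every z₀ = (x₀, y₀) ∈ ℝ², the closure of A(z₀) contains the closed half-plane H(z₀) = {(u,v) ∈ ℝ² : u ≥ x₀}. -/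
/-- `Reachable a₁ a₂ α₁ α₂ κ₁ κ₂ z₀ w`: the point `w` can be reached from `z₀` by
concatenating finitely many integral curves of the control system
`ẋ = a₁x − α₁x² + y² + κ₁u`, `ẏ = a₂y − α₂xy + κ₂v` with constant controls `(u,v)`,
each run for a nonnegative time. -/
inductive Reachable (a₁ a₂ α₁ α₂ κ₁ κ₂ : ℝ) : ℝ × ℝ → ℝ × ℝ → Prop
  | refl (z : ℝ × ℝ) : Reachable a₁ a₂ α₁ α₂ κ₁ κ₂ z z
  | step {z w w' : ℝ × ℝ} (u v T : ℝ) (γ : ℝ → ℝ × ℝ) (hT : 0 ≤ T)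
      (hode : ∀ s ∈ Set.Icc (0:ℝ) T,
        HasDerivAt γ
          (a₁ * (γ s).1 - α₁ * (γ s).1 ^ 2 + (γ s).2 ^ 2 + κ₁ * u,
            a₂ * (γ s).2 - α₂ * (γ s).1 * (γ s).2 + κ₂ * v) s)
      (h0 : γ 0 = w) (hend : γ T = w')
      (hprev : Reachable a₁ a₂ α₁ α₂ κ₁ κ₂ z w) :
      Reachable a₁ a₂ α₁ α₂ κ₁ κ₂ z w'

open Set Metric

lemma my_lipschitz (F : ℝ × ℝ → ℝ × ℝ) (hF : ContDiff ℝ 1 F) (z : ℝ × ℝ) (R : ℝ) :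
    ∃ L : NNReal, LipschitzOnWith L F (closedBall z R) := by
  obtain ⟨K, hK⟩ := (isCompact_closedBall z R).exists_bound_of_continuousOn
    ((hF.continuous_fderiv one_ne_zero).norm.continuousOn)
  refine ⟨NNReal.mk (max K 0) (le_max_right _ _), Convex.lipschitzOnWith_of_nnnorm_hasFDerivWithin_le
    (fun x _ => (hF.differentiable one_ne_zero x).hasFDerivAt.hasFDerivWithinAt)
    (fun x hx => ?_) (convex_closedBall _ _)⟩
  rw [← NNReal.coe_le_coe]
  simp only [coe_nnnorm, NNReal.coe_mk]
  exact le_trans (by simpa using hK x hx) (le_max_left _ _)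

lemma exists_sol (F : ℝ × ℝ → ℝ × ℝ) (hF : ContDiff ℝ 1 F) (z' : ℝ × ℝ) (R C T : ℝ)
    (hR : 0 < R) (hT : 0 < T) (hC : ∀ x ∈ closedBall z' R, ‖F x‖ ≤ C) (hCT : C * T < R) :
    ∃ γ : ℝ → ℝ × ℝ, γ 0 = z' ∧
      ∀ t ∈ Icc (0:ℝ) T, HasDerivAt γ (F (γ t)) t ∧ γ t ∈ closedBall z' R := by
  have hC0 : 0 ≤ C := le_trans (norm_nonneg _) (hC z' (mem_closedBall_self hR.le))
  obtain ⟨L, hL⟩ := my_lipschitz F hF z' R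
  have hpl : IsPicardLindelof (fun _ x => F x) (tmin := 0) (tmax := T) ⟨0, le_rfl, hT.le⟩ z'
      ⟨R, hR.le⟩ 0 ⟨C, hC0⟩ L :=
    { lipschitzOnWith := fun _ _ => hL
      continuousOn := fun x _ => continuousOn_const
      norm_le := fun _ _ x hx => hC x hx
      mul_max_le := by
        show C * max (T - 0) (0 - 0) ≤ R - 0
        have : max (T - 0) (0 - 0) = T := by
          rw [sub_zero, sub_zero]; exact max_eq_left hT.le
        rw [this, sub_zero]; exact hCT.le }
  obtain ⟨f, hf0, hderiv⟩ := hpl.exists_eq_forall_mem_Icc_hasDerivWithinAt₀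
  replace hf0 : f 0 = z' := hf0
  have hcont : ContinuousOn f (Icc 0 T) := fun t ht => (hderiv t ht).continuousWithinAt
  -- confinement
  set S : Set ℝ := {t | t ∈ Icc (0:ℝ) T ∧ ∀ s ∈ Icc (0:ℝ) t, f s ∈ closedBall z' R} with hS
  have h0S : (0:ℝ) ∈ S := by
    refine ⟨⟨le_rfl, hT.le⟩, fun s hs => ?_⟩
    have : s = 0 := le_antisymm hs.2 hs.1
    rw [this, hf0]; exact mem_closedBall_self hR.le
  have hSbdd : BddAbove S := ⟨T, fun t ht => ht.1.2⟩
  have hSne : S.Nonempty := ⟨0, h0S⟩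
  set τ := sSup S with hτ
  have hτ0 : 0 ≤ τ := le_csSup hSbdd h0S
  have hτT : τ ≤ T := csSup_le hSne fun t ht => ht.1.2
  have hIco : ∀ s ∈ Ico (0:ℝ) τ, f s ∈ closedBall z' R := by
    intro s hs
    obtain ⟨t, htS, hst⟩ := exists_lt_of_lt_csSup hSne hs.2
    exact htS.2 s ⟨hs.1, hst.le⟩
  have hfτmem : f τ ∈ closedBall z' R := by
    rcases eq_or_lt_of_le hτ0 with h0 | h0
    · rw [← h0, hf0]; exact mem_closedBall_self hR.le
    · have hcw : ContinuousWithinAt f (Ico 0 τ) τ :=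
        (hcont τ ⟨hτ0, hτT⟩).mono (Ico_subset_Icc_self.trans (Icc_subset_Icc le_rfl hτT))
      have hmem : τ ∈ closure (Ico (0:ℝ) τ) := by
        rw [closure_Ico (ne_of_lt h0)]; exact ⟨hτ0, le_rfl⟩
      have h1 := hcw.mem_closure_image hmem
      have h2 : closure (f '' Ico 0 τ) ⊆ closure (closedBall z' R) :=
        closure_mono (image_subset_iff.mpr fun x hx => hIco x hx)
      have h3 := h2 h1
      rwa [IsClosed.closure_eq Metric.isClosed_closedBall] at h3
  have hτS : τ ∈ S := by
    refine ⟨⟨hτ0, hτT⟩, fun s hs => ?_⟩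
    rcases lt_or_eq_of_le hs.2 with h | h
    · exact hIco s ⟨hs.1, h⟩
    · rw [h]; exact hfτmem
  -- dist bound on [0, τ]
  have hkey : ∀ t ∈ Icc (0:ℝ) τ, dist (f t) z' ≤ C * t := by
    have hf' : ∀ x ∈ Icc (0:ℝ) τ, HasDerivWithinAt f (F (f x)) (Icc 0 τ) x := fun x hx =>
      (hderiv x ⟨hx.1, hx.2.trans hτT⟩).mono (Icc_subset_Icc le_rfl hτT)
    have hbd : ∀ x ∈ Ico (0:ℝ) τ, ‖F (f x)‖ ≤ C := fun x hx =>
      hC _ (hτS.2 x ⟨hx.1, hx.2.le⟩)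
    intro t ht
    have := norm_image_sub_le_of_norm_deriv_le_segment' hf' hbd t ht
    rw [hf0] at this
    simpa [dist_eq_norm] using this
  have hτeq : τ = T := by
    by_contra hne
    have hτltT : τ < T := lt_of_le_of_ne hτT hne
    have hfτ : dist (f τ) z' ≤ C * τ := hkey τ ⟨hτ0, le_rfl⟩
    have hlt : C * τ < R := lt_of_le_of_lt (by nlinarith) hCT
    have hcτ : ContinuousWithinAt f (Icc 0 T) τ := hcont τ ⟨hτ0, hτT⟩
    rw [Metric.continuousWithinAt_iff] at hcτ
    obtain ⟨δ, hδ0, hδ⟩ := hcτ (R - C * τ) (by linarith)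
    set t' := min T (τ + δ / 2) with ht'
    have ht'τ : τ < t' := by
      apply lt_min hτltT; linarith
    have ht'S : t' ∈ S := by
      refine ⟨⟨hτ0.trans ht'τ.le, min_le_left _ _⟩, fun s hs => ?_⟩
      rcases le_or_gt s τ with h | h
      · exact hτS.2 s ⟨hs.1, h⟩
      · have hsT : s ≤ T := hs.2.trans (min_le_left _ _)
        have hsδ : |s - τ| < δ := by
          rw [abs_of_nonneg (by linarith)]
          have : s ≤ τ + δ / 2 := hs.2.trans (min_le_right _ _)
          linarith
        have := hδ ⟨hs.1.trans' (by norm_num), hsT⟩ (by rwa [Real.dist_eq])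
        rw [mem_closedBall]
        refine le_of_lt ?_
        calc dist (f s) z' ≤ dist (f s) (f τ) + dist (f τ) z' := dist_triangle _ _ _
          _ < (R - C * τ) + C * τ := by exact add_lt_add_of_lt_of_le this hfτ
          _ = R := by ring
    exact absurd (le_csSup hSbdd ht'S) (not_le.mpr ht'τ)
  have hball : ∀ t ∈ Icc (0:ℝ) T, f t ∈ closedBall z' R := by
    intro t ht; exact hτS.2 t (by rwa [hτeq])
  -- extension
  set l0 : ℝ → ℝ × ℝ := fun t => f 0 + t • F (f 0) with hl0
  set lT : ℝ → ℝ × ℝ := fun t => f T + (t - T) • F (f T) with hlT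
  set γ : ℝ → ℝ × ℝ := fun t => if t ≤ 0 then l0 t else if t < T then f t else lT t with hγ
  have hγeq : EqOn γ f (Icc 0 T) := by
    intro t ht
    rcases eq_or_lt_of_le ht.1 with h0 | h0
    · simp [hγ, ← h0, hl0]
    · rcases lt_or_eq_of_le ht.2 with hT' | hT'
      · simp [hγ, not_le.mpr h0, hT']
      · subst hT'
        simp [hγ, not_le.mpr h0, hlT]
  have hγd : ∀ t ∈ Icc (0:ℝ) T, HasDerivAt γ (F (γ t)) t := by
    intro t ht
    rw [hγeq ht]
    rcases eq_or_lt_of_le ht.1 with h0 | h0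
    · -- t = 0
      subst h0
      have hright : HasDerivWithinAt γ (F (f 0)) (Ici 0) 0 := by
        have h1 : HasDerivWithinAt f (F (f 0)) (Icc 0 T) 0 := by
          simpa [hf0] using hderiv 0 ⟨le_rfl, hT.le⟩
        have h2 : HasDerivWithinAt γ (F (f 0)) (Icc 0 T) 0 :=
          h1.congr hγeq (hγeq ⟨le_rfl, hT.le⟩)
        refine h2.mono_of_mem_nhdsWithin ?_
        have : Icc (0:ℝ) T = Ici 0 ∩ Iic T := by rw [Ici_inter_Iic]
        rw [this]
        exact inter_mem_nhdsWithin _ (Iic_mem_nhds hT)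
      have hleft : HasDerivWithinAt γ (F (f 0)) (Iic 0) 0 := by
        have hl : HasDerivAt l0 (F (f 0)) 0 := by
          have : HasDerivAt (fun t : ℝ => t • F (f 0)) ((1:ℝ) • F (f 0)) 0 :=
            (hasDerivAt_id 0).smul_const (F (f 0))
          simpa [hl0, one_smul] using this.const_add (f 0)
        refine hl.hasDerivWithinAt.congr (fun x hx => ?_) ?_
        · simp [hγ, (mem_Iic.mp hx)]
        · simp [hγ, hl0]
      have := hleft.union hright
      rw [Iic_union_Ici] at this
      exact hasDerivWithinAt_univ.mp this
    · rcases lt_or_eq_of_le ht.2 with hT' | hT'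
      · -- interior
        have hf : HasDerivAt f (F (f t)) t :=
          (hderiv t ht).hasDerivAt (Icc_mem_nhds h0 hT')
        refine hf.congr_of_eventuallyEq ?_
        filter_upwards [Icc_mem_nhds h0 hT'] with x hx
        exact hγeq hx
      · -- t = T
        subst hT'
        have hleft : HasDerivWithinAt γ (F (f t)) (Iic t) t := by
          have h1 : HasDerivWithinAt f (F (f t)) (Icc 0 t) t := hderiv t ht
          have h2 : HasDerivWithinAt γ (F (f t)) (Icc 0 t) t :=
            h1.congr hγeq (hγeq ht)
          refine h2.mono_of_mem_nhdsWithin ?_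
          have : Icc (0:ℝ) t = Iic t ∩ Ici 0 := by rw [inter_comm, Ici_inter_Iic]
          rw [this]
          exact inter_mem_nhdsWithin _ (Ici_mem_nhds h0)
        have hright : HasDerivWithinAt γ (F (f t)) (Ici t) t := by
          have hl : HasDerivAt lT (F (f t)) t := by
            have : HasDerivAt (fun s : ℝ => (s - t) • F (f t)) ((1:ℝ) • F (f t)) t :=
              ((hasDerivAt_id t).sub_const t).smul_const (F (f t))
            simpa [hlT, one_smul] using this.const_add (f t)
          refine hl.hasDerivWithinAt.congr (fun x hx => ?_) ?_
          · rcases eq_or_lt_of_le (mem_Ici.mp hx) with h | h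
            · rw [← h]; exact (hγeq ht).trans (by simp [hlT])
            · simp [hγ, not_le.mpr (h0.trans h), not_lt.mpr h.le, hlT]
          · exact (hγeq ht).trans (by simp [hlT])
        have := hleft.union hright
        rw [Iic_union_Ici] at this
        exact hasDerivWithinAt_univ.mp this
  exact ⟨γ, (hγeq ⟨le_rfl, hT.le⟩).trans hf0, fun t ht =>
    ⟨hγd t ht, by rw [hγeq ht]; exact hball t ht⟩⟩

lemma deriv_fst {γ : ℝ → ℝ × ℝ} {d : ℝ × ℝ} {t : ℝ} (h : HasDerivAt γ d t) :
    HasDerivAt (fun s => (γ s).1) d.1 t :=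
  (ContinuousLinearMap.fst ℝ ℝ ℝ).hasFDerivAt.comp_hasDerivAt t h

lemma deriv_snd {γ : ℝ → ℝ × ℝ} {d : ℝ × ℝ} {t : ℝ} (h : HasDerivAt γ d t) :
    HasDerivAt (fun s => (γ s).2) d.2 t :=
  (ContinuousLinearMap.snd ℝ ℝ ℝ).hasFDerivAt.comp_hasDerivAt t h

lemma scalar_est (g dg : ℝ → ℝ) (T lo hi : ℝ) (hT : 0 ≤ T)
    (hg : ∀ t ∈ Icc (0:ℝ) T, HasDerivAt g (dg t) t)
    (hlo : ∀ t ∈ Icc (0:ℝ) T, lo ≤ dg t) (hhi : ∀ t ∈ Icc (0:ℝ) T, dg t ≤ hi) :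
    ∀ t ∈ Icc (0:ℝ) T, lo * t ≤ g t - g 0 ∧ g t - g 0 ≤ hi * t := by
  set mid := (lo + hi) / 2 with hmid
  set ψ : ℝ → ℝ := fun t => g t - mid * t with hψ
  have hψd : ∀ t ∈ Icc (0:ℝ) T, HasDerivWithinAt ψ (dg t - mid) (Icc 0 T) t := by
    intro t ht
    exact ((hg t ht).sub (by simpa using (hasDerivAt_id t).const_mul mid)).hasDerivWithinAt
  have hbd : ∀ t ∈ Ico (0:ℝ) T, ‖dg t - mid‖ ≤ (hi - lo) / 2 := by
    intro t ht
    have h1 := hlo t (Ico_subset_Icc_self ht)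
    have h2 := hhi t (Ico_subset_Icc_self ht)
    rw [Real.norm_eq_abs, abs_le]
    constructor <;> [linarith; linarith]
  intro t ht
  have := norm_image_sub_le_of_norm_deriv_le_segment' hψd hbd t ht
  rw [Real.norm_eq_abs, abs_le] at this
  have h1 := this.1
  have h2 := this.2
  simp only [hψ, mul_zero, sub_zero] at h1 h2
  constructor <;> nlinarith [ht.1]

lemma abs_comp1 {a α X Ym x y : ℝ} (hα : 0 ≤ α) (hx : |x| ≤ X) (hy : |y| ≤ Ym) :
    |a * x - α * x ^ 2 + y ^ 2| ≤ |a| * X + α * X ^ 2 + Ym ^ 2 := by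
  have h0 := abs_nonneg x
  have h1 : |a * x| ≤ |a| * X := by
    rw [abs_mul]; exact mul_le_mul_of_nonneg_left hx (abs_nonneg a)
  have hx2 : x ^ 2 ≤ X ^ 2 := by nlinarith [abs_le.mp hx, neg_abs_le x, le_abs_self x]
  have hy2 : y ^ 2 ≤ Ym ^ 2 := by nlinarith [neg_abs_le y, le_abs_self y, abs_nonneg y]
  have t1 := abs_add_le (a * x - α * x ^ 2) (y ^ 2)
  have t2 := abs_sub (a * x) (α * x ^ 2)
  have t3 : |α * x ^ 2| = α * x ^ 2 := abs_of_nonneg (by positivity)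
  have t4 : |y ^ 2| = y ^ 2 := abs_of_nonneg (by positivity)
  nlinarith [sq_nonneg x, sq_nonneg y]

lemma abs_comp2 {a α X Ym x y : ℝ} (hα : 0 ≤ α) (hX : 0 ≤ X) (hx : |x| ≤ X) (hy : |y| ≤ Ym) :
    |a * y - α * x * y| ≤ |a| * Ym + α * X * Ym := by
  have h1 : |a * y| ≤ |a| * Ym := by
    rw [abs_mul]; exact mul_le_mul_of_nonneg_left hy (abs_nonneg a)
  have h2 : |α * x * y| ≤ α * X * Ym := by
    rw [abs_mul, abs_mul, abs_of_nonneg hα]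
    have := abs_nonneg y
    have := abs_nonneg x
    nlinarith [mul_le_mul hx hy (abs_nonneg y) hX]
  have := abs_sub (a * y) (α * x * y)
  linarith

lemma reach_trans {a₁ a₂ α₁ α₂ κ₁ κ₂ : ℝ} {z w w' : ℝ × ℝ}
    (h1 : Reachable a₁ a₂ α₁ α₂ κ₁ κ₂ z w) (h2 : Reachable a₁ a₂ α₁ α₂ κ₁ κ₂ w w') :
    Reachable a₁ a₂ α₁ α₂ κ₁ κ₂ z w' := by
  induction h2 with
  | refl => exact h1
  | step u v T γ hT hode h0 hend _ ih => exact .step u v T γ hT hode h0 hend ih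

lemma ball_coord {z' p : ℝ × ℝ} {R : ℝ} (h : p ∈ closedBall z' R) :
    |p.1 - z'.1| ≤ R ∧ |p.2 - z'.2| ≤ R := by
  rw [mem_closedBall, Prod.dist_eq, max_le_iff, Real.dist_eq, Real.dist_eq] at h
  exact h

section
variable {a₁ a₂ α₁ α₂ κ₁ κ₂ : ℝ}

lemma vpiece (hα₁ : 0 ≤ α₁) (hα₂ : 0 ≤ α₂) (hκ₂ : 0 < κ₂)
    (s : ℝ) (hs : s = 1 ∨ s = -1) (z' : ℝ × ℝ) (X Ym B N : ℝ)
    (hX : |z'.1| + 1 ≤ X) (hYm : |z'.2| + 1 ≤ Ym)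
    (hB : 0 < B) (hB1 : |a₁| * X + α₁ * X ^ 2 + Ym ^ 2 ≤ B)
    (hB2 : |a₂| * Ym + α₂ * X * Ym ≤ B)
    (hN : B < N) (y_t : ℝ) (hyt : 0 < s * (y_t - z'.2)) :
    ∃ w : ℝ × ℝ, Reachable a₁ a₂ α₁ α₂ κ₁ κ₂ z' w ∧
      0 < s * (w.2 - z'.2) ∧
      |w.1 - z'.1| ≤ B / (N - B) * (s * (w.2 - z'.2)) ∧
      (w.2 = y_t ∨ (0 < s * (y_t - w.2) ∧ (N - B) / (B + N + 1) ≤ s * (w.2 - z'.2))) := by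
  have hs2 : s * s = 1 := by rcases hs with h | h <;> rw [h] <;> norm_num
  have hs2' : s ^ 2 = 1 := by rw [sq]; exact hs2
  have hs0 : s ≠ 0 := by rcases hs with h | h <;> rw [h] <;> norm_num
  have hN0 : 0 < N := hB.trans hN
  set vq : ℝ := s * N / κ₂ with hvq
  have hκv : κ₂ * vq = s * N := by rw [hvq]; field_simp
  set Fv : ℝ × ℝ → ℝ × ℝ := fun z =>
    (a₁ * z.1 - α₁ * z.1 ^ 2 + z.2 ^ 2 + κ₁ * 0,
      a₂ * z.2 - α₂ * z.1 * z.2 + κ₂ * vq) with hFv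
  have hFc : ContDiff ℝ 1 Fv := by
    rw [hFv]; fun_prop
  set C : ℝ := B + N with hC
  set T : ℝ := 1 / (B + N + 1) with hT
  have hT0 : 0 < T := by rw [hT]; positivity
  have hXnn : 0 ≤ X := le_trans (by positivity) hX
  have hco : ∀ p ∈ closedBall z' 1, |p.1| ≤ X ∧ |p.2| ≤ Ym := by
    intro p hp
    obtain ⟨h1, h2⟩ := ball_coord hp
    constructor
    · calc |p.1| ≤ |z'.1| + |p.1 - z'.1| := by
            have := abs_add_le z'.1 (p.1 - z'.1); simpa using this
        _ ≤ X := by linarith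
    · calc |p.2| ≤ |z'.2| + |p.2 - z'.2| := by
            have := abs_add_le z'.2 (p.2 - z'.2); simpa using this
        _ ≤ Ym := by linarith
  have habs1 : ∀ p ∈ closedBall z' 1, |(Fv p).1| ≤ B := by
    intro p hp
    obtain ⟨h1, h2⟩ := hco p hp
    have := abs_comp1 (a := a₁) hα₁ h1 h2
    simpa [hFv, mul_zero, add_zero] using this.trans hB1
  have habs2 : ∀ p ∈ closedBall z' 1, |a₂ * p.2 - α₂ * p.1 * p.2| ≤ B := by
    intro p hp
    obtain ⟨h1, h2⟩ := hco p hp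
    exact (abs_comp2 (a := a₂) hα₂ hXnn h1 h2).trans hB2
  have hsN : |s * N| = N := by
    rw [abs_mul]
    rcases hs with h | h <;> rw [h] <;> simp [abs_of_pos hN0]
  have hCb : ∀ p ∈ closedBall z' 1, ‖Fv p‖ ≤ C := by
    intro p hp
    rw [Prod.norm_def]
    rw [max_le_iff]
    constructor
    · rw [Real.norm_eq_abs]
      have := habs1 p hp
      rw [hC]; linarith
    · rw [Real.norm_eq_abs]
      have h2 := habs2 p hp
      have : |(Fv p).2| ≤ |a₂ * p.2 - α₂ * p.1 * p.2| + |s * N| := by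
        rw [hFv, hκv]; exact abs_add_le _ _
      rw [hsN] at this
      rw [hC]; linarith
  have hCT : C * T < 1 := by
    rw [hT, hC, mul_one_div, div_lt_one (by linarith)]
    linarith
  obtain ⟨γ, hγ0, hγp⟩ := exists_sol Fv hFc z' 1 C T one_pos hT0 hCb hCT
  set m : ℝ := N - B with hm
  have hm0 : 0 < m := by rw [hm]; linarith
  -- derivative facts
  set g : ℝ → ℝ := fun t => s * (γ t).2 with hg
  have hgd : ∀ t ∈ Icc (0:ℝ) T, HasDerivAt g (s * (Fv (γ t)).2) t := fun t ht =>
    (deriv_snd (hγp t ht).1).const_mul s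
  have hglo : ∀ t ∈ Icc (0:ℝ) T, m ≤ s * (Fv (γ t)).2 := by
    intro t ht
    have h2 := habs2 (γ t) (hγp t ht).2
    have : s * (Fv (γ t)).2 = s * (a₂ * (γ t).2 - α₂ * (γ t).1 * (γ t).2) + N := by
      rw [hFv]; simp only; rw [hκv]; ring_nf; rw [hs2']; ring
    rw [this]
    have := neg_abs_le (s * (a₂ * (γ t).2 - α₂ * (γ t).1 * (γ t).2))
    have habs : |s * (a₂ * (γ t).2 - α₂ * (γ t).1 * (γ t).2)| ≤ B := by
      rw [abs_mul]
      rcases hs with h | h <;> rw [h] <;> simpa using h2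
    rw [hm]; linarith [neg_abs_le (s * (a₂ * (γ t).2 - α₂ * (γ t).1 * (γ t).2))]
  have hghi : ∀ t ∈ Icc (0:ℝ) T, s * (Fv (γ t)).2 ≤ C := by
    intro t ht
    have h2 := habs2 (γ t) (hγp t ht).2
    have heq : s * (Fv (γ t)).2 = s * (a₂ * (γ t).2 - α₂ * (γ t).1 * (γ t).2) + N := by
      rw [hFv]; simp only; rw [hκv]; ring_nf; rw [hs2']; ring
    rw [heq]
    have habs : |s * (a₂ * (γ t).2 - α₂ * (γ t).1 * (γ t).2)| ≤ B := by
      rw [abs_mul]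
      rcases hs with h | h <;> rw [h] <;> simpa using h2
    rw [hC]; linarith [le_abs_self (s * (a₂ * (γ t).2 - α₂ * (γ t).1 * (γ t).2))]
  have hgest := scalar_est g (fun t => s * (Fv (γ t)).2) T m C hT0.le hgd hglo hghi
  set h1f : ℝ → ℝ := fun t => (γ t).1 with hh1
  have hxd : ∀ t ∈ Icc (0:ℝ) T, HasDerivAt h1f ((Fv (γ t)).1) t := fun t ht =>
    deriv_fst (hγp t ht).1
  have hxlo : ∀ t ∈ Icc (0:ℝ) T, -B ≤ (Fv (γ t)).1 := fun t ht => by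
    linarith [neg_abs_le ((Fv (γ t)).1), habs1 (γ t) (hγp t ht).2]
  have hxhi : ∀ t ∈ Icc (0:ℝ) T, (Fv (γ t)).1 ≤ B := fun t ht => by
    linarith [le_abs_self ((Fv (γ t)).1), habs1 (γ t) (hγp t ht).2]
  have hxest := scalar_est h1f (fun t => (Fv (γ t)).1) T (-B) B hT0.le hxd hxlo hxhi
  have hgcont : ContinuousOn g (Icc 0 T) := fun t ht =>
    ((hgd t ht).continuousAt).continuousWithinAt
  -- generic endpoint handling
  have key : ∀ t₀ ∈ Icc (0:ℝ) T, ∃ w : ℝ × ℝ, w = γ t₀ ∧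
      Reachable a₁ a₂ α₁ α₂ κ₁ κ₂ z' w ∧
      s * (w.2 - z'.2) = g t₀ - g 0 ∧
      |w.1 - z'.1| ≤ B / m * (g t₀ - g 0) := by
    intro t₀ ht₀
    refine ⟨γ t₀, rfl, ?_, by simp only [hg]; rw [hγ0]; ring, ?_⟩
    · refine Reachable.step 0 vq t₀ γ ht₀.1 (fun r hr => ?_) hγ0 rfl (Reachable.refl z')
      exact (hγp r ⟨hr.1, hr.2.trans ht₀.2⟩).1
    · have hml := (hgest t₀ ht₀).1
      have hxb := hxest t₀ ht₀
      have ht₀m : t₀ ≤ (g t₀ - g 0) / m := by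
        rw [le_div_iff₀ hm0]; linarith
      have habs : |h1f t₀ - h1f 0| ≤ B * t₀ := by
        rw [abs_le]; constructor <;> linarith [hxb.1, hxb.2]
      have : |h1f t₀ - h1f 0| ≤ B * ((g t₀ - g 0) / m) := by
        refine habs.trans ?_
        exact mul_le_mul_of_nonneg_left ht₀m hB.le
      have heq : h1f t₀ - h1f 0 = (γ t₀).1 - z'.1 := by rw [hh1]; simp [hγ0]
      rw [heq] at this
      calc |(γ t₀).1 - z'.1| ≤ B * ((g t₀ - g 0) / m) := this
        _ = B / m * (g t₀ - g 0) := by ring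
  have hg0 : g 0 = s * z'.2 := by simp only [hg, hγ0]
  rcases le_or_gt (s * y_t) (g T) with hhit | hnohit
  · -- hitting case
    have hmem : s * y_t ∈ Icc (g 0) (g T) := ⟨by rw [hg0]; linarith, hhit⟩
    obtain ⟨t₀, ht₀, hgt₀⟩ := intermediate_value_Icc hT0.le hgcont hmem
    obtain ⟨w, hwdef, hreach, hgain, hdrift⟩ := key t₀ ht₀
    have hw2 : w.2 = y_t := by
      have : s * w.2 = s * y_t := by
        rw [hwdef]; rw [hg] at hgt₀; exact hgt₀
      exact mul_left_cancel₀ hs0 this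
    refine ⟨w, hreach, ?_, ?_, Or.inl hw2⟩
    · rw [hw2]; exact hyt
    · rw [hgain]; exact hdrift
  · -- no hit
    obtain ⟨w, hwdef, hreach, hgain, hdrift⟩ := key T ⟨hT0.le, le_rfl⟩
    have hgT : g T = s * w.2 := by rw [hwdef, hg]
    have hprog : m * T ≤ g T - g 0 := (hgest T ⟨hT0.le, le_rfl⟩).1
    have hmT : m * T = (N - B) / (B + N + 1) := by rw [hm, hT]; ring
    refine ⟨w, hreach, ?_, ?_, Or.inr ⟨?_, ?_⟩⟩
    · rw [hgain]
      have : 0 < m * T := mul_pos hm0 hT0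
      linarith
    · rw [hgain]; exact hdrift
    · rw [hgT] at hnohit
      nlinarith [hnohit]
    · rw [hgain, ← hmT]; exact hprog

lemma reachV (hα₁ : 0 ≤ α₁) (hα₂ : 0 ≤ α₂) (hκ₂ : 0 < κ₂) (z : ℝ × ℝ) (y_t ε : ℝ)
    (hε : 0 < ε) :
    ∃ w : ℝ × ℝ, Reachable a₁ a₂ α₁ α₂ κ₁ κ₂ z w ∧ w.2 = y_t ∧ |w.1 - z.1| ≤ ε := by
  rcases eq_or_ne z.2 y_t with he | hne
  · exact ⟨z, Reachable.refl z, he.symm ▸ rfl, by simp [hε.le]⟩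
  · obtain ⟨s, hs, hΔ⟩ : ∃ s : ℝ, (s = 1 ∨ s = -1) ∧ 0 < s * (y_t - z.2) := by
      rcases lt_or_gt_of_ne hne with h | h
      · exact ⟨1, Or.inl rfl, by linarith⟩
      · exact ⟨-1, Or.inr rfl, by linarith [neg_mul_comm (1:ℝ) (y_t - z.2)]⟩
    have hs0 : s ≠ 0 := by rcases hs with h | h <;> rw [h] <;> norm_num
    have habs_s : ∀ r : ℝ, |s * r| = |r| := by
      intro r; rcases hs with h | h <;> rw [h] <;> simp
    obtain ⟨Δ, hΔdef⟩ : ∃ d : ℝ, d = s * (y_t - z.2) := ⟨_, rfl⟩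
    obtain ⟨X, hXdef⟩ : ∃ d : ℝ, d = |z.1| + ε + 1 := ⟨_, rfl⟩
    obtain ⟨Ym, hYmdef⟩ : ∃ d : ℝ, d = |z.2| + Δ + 1 := ⟨_, rfl⟩
    obtain ⟨B, hBdef⟩ : ∃ d : ℝ, d = |a₁| * X + α₁ * X ^ 2 + Ym ^ 2 + |a₂| * Ym + α₂ * X * Ym + 1 := ⟨_, rfl⟩
    have hΔpos : 0 < Δ := hΔdef ▸ hΔ
    have hXnn : 0 ≤ X := by rw [hXdef]; positivity
    have hYmnn : 0 ≤ Ym := by rw [hYmdef]; linarith [abs_nonneg z.2]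
    have t1 : 0 ≤ |a₁| * X := mul_nonneg (abs_nonneg _) hXnn
    have t2 : 0 ≤ α₁ * X ^ 2 := mul_nonneg hα₁ (sq_nonneg _)
    have t3 : 0 ≤ Ym ^ 2 := sq_nonneg _
    have t4 : 0 ≤ |a₂| * Ym := mul_nonneg (abs_nonneg _) hYmnn
    have t5 : 0 ≤ α₂ * X * Ym := mul_nonneg (mul_nonneg hα₂ hXnn) hYmnn
    have hB0 : 0 < B := by rw [hBdef]; linarith
    have hB1 : |a₁| * X + α₁ * X ^ 2 + Ym ^ 2 ≤ B := by rw [hBdef]; linarith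
    have hB2 : |a₂| * Ym + α₂ * X * Ym ≤ B := by rw [hBdef]; linarith
    obtain ⟨N, hNdef⟩ : ∃ d : ℝ, d = B + 1 + B * Δ / ε := ⟨_, rfl⟩
    have hBΔε : 0 < B * Δ / ε := div_pos (mul_pos hB0 hΔpos) hε
    have hN : B < N := by rw [hNdef]; linarith
    obtain ⟨m, hmdef⟩ : ∃ d : ℝ, d = N - B := ⟨_, rfl⟩
    have hm0 : 0 < m := by rw [hmdef]; linarith
    have hcoef : B / m * Δ ≤ ε := by
      have hεm : ε * m = ε + B * Δ := by
        rw [hmdef, hNdef]; field_simp; ring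
      rw [div_mul_eq_mul_div, div_le_iff₀ hm0]
      nlinarith
    obtain ⟨ρ, hρdef⟩ : ∃ d : ℝ, d = (N - B) / (B + N + 1) := ⟨_, rfl⟩
    have hρ0 : 0 < ρ := by
      rw [hρdef]; apply div_pos <;> linarith
    obtain ⟨n, hn⟩ := exists_nat_ge (Δ / ρ)
    have hΔn : Δ ≤ n * ρ := by
      rw [div_le_iff₀ hρ0] at hn; linarith
    have main : ∀ k : ℕ, ∀ z' : ℝ × ℝ, Reachable a₁ a₂ α₁ α₂ κ₁ κ₂ z z' →
        0 ≤ s * (z'.2 - z.2) → 0 ≤ s * (y_t - z'.2) →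
        |z'.1 - z.1| ≤ B / m * (s * (z'.2 - z.2)) → s * (y_t - z'.2) ≤ k * ρ →
        ∃ w : ℝ × ℝ, Reachable a₁ a₂ α₁ α₂ κ₁ κ₂ z w ∧ w.2 = y_t ∧ |w.1 - z.1| ≤ ε := by
      intro k
      induction k with
      | zero =>
        intro z' hre hlow hup hdr hk
        have h0 : s * (y_t - z'.2) = 0 := le_antisymm (by simpa using hk) hup
        have hzy : z'.2 = y_t := by
          rcases mul_eq_zero.mp h0 with h | h
          · exact absurd h hs0
          · linarith
        refine ⟨z', hre, hzy, ?_⟩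
        have hsum : s * (z'.2 - z.2) = Δ := by rw [hzy, hΔdef]
        rw [hsum] at hdr
        linarith
      | succ k ih =>
        intro z' hre hlow hup hdr hk
        rcases eq_or_lt_of_le hup with h0 | hpos
        · have hzy : z'.2 = y_t := by
            rcases mul_eq_zero.mp h0.symm with h | h
            · exact absurd h hs0
            · linarith
          refine ⟨z', hre, hzy, ?_⟩
          have hsum : s * (z'.2 - z.2) = Δ := by rw [hzy, hΔdef]
          rw [hsum] at hdr
          linarith
        · -- apply the piece
          have hgle : s * (z'.2 - z.2) ≤ Δ := by
            have : s * (z'.2 - z.2) + s * (y_t - z'.2) = Δ := by rw [hΔdef]; ring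
            linarith
          have hdrε : |z'.1 - z.1| ≤ ε := by
            have h1 : B / m * (s * (z'.2 - z.2)) ≤ B / m * Δ :=
              mul_le_mul_of_nonneg_left hgle (by positivity)
            linarith
          have hXz : |z'.1| + 1 ≤ X := by
            have := abs_add_le z.1 (z'.1 - z.1)
            simp only [add_sub_cancel] at this
            rw [hXdef]; linarith
          have hYmz : |z'.2| + 1 ≤ Ym := by
            have habs2 : |z'.2 - z.2| ≤ Δ := by
              have heq : |z'.2 - z.2| = s * (z'.2 - z.2) := by
                rw [← habs_s (z'.2 - z.2)]
                exact abs_of_nonneg hlow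
              linarith [heq ▸ hgle]
            have := abs_add_le z.2 (z'.2 - z.2)
            simp only [add_sub_cancel] at this
            rw [hYmdef]; linarith
          obtain ⟨w, hwre, hwgain, hwdr, hwcase⟩ :=
            vpiece (a₁ := a₁) (a₂ := a₂) (κ₁ := κ₁) hα₁ hα₂ hκ₂ s hs z' X Ym B N
              hXz hYmz hB0 hB1 hB2 hN y_t hpos
          have hreW : Reachable a₁ a₂ α₁ α₂ κ₁ κ₂ z w := reach_trans hre hwre
          have hsum3 : s * (w.2 - z.2) = s * (z'.2 - z.2) + s * (w.2 - z'.2) := by ring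
          have hdrW : |w.1 - z.1| ≤ B / m * (s * (w.2 - z.2)) := by
            have htri : |w.1 - z.1| ≤ |w.1 - z'.1| + |z'.1 - z.1| := by
              have := abs_add_le (w.1 - z'.1) (z'.1 - z.1)
              simpa using this
            rw [hsum3, mul_add]
            have : |w.1 - z'.1| ≤ B / m * (s * (w.2 - z'.2)) := by
              rw [hmdef]; exact hwdr
            linarith
          rcases hwcase with hhit | ⟨hrem, hprog⟩
          · refine ⟨w, hreW, hhit, ?_⟩
            have hsum4 : s * (w.2 - z.2) = Δ := by rw [hhit, hΔdef]
            rw [hsum4] at hdrW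
            linarith
          · have hlowW : 0 ≤ s * (w.2 - z.2) := by rw [hsum3]; linarith
            have hupW : 0 ≤ s * (y_t - w.2) := hrem.le
            have hkW : s * (y_t - w.2) ≤ k * ρ := by
              have hprog' : ρ ≤ s * (w.2 - z'.2) := by rw [hρdef]; exact hprog
              have : s * (y_t - w.2) = s * (y_t - z'.2) - s * (w.2 - z'.2) := by ring
              rw [this]
              push_cast [Nat.cast_succ] at hk ⊢
              linarith
            exact ih w hreW hlowW hupW hdrW hkW
    obtain ⟨w, hwre, hw2, hwdr⟩ := main n z (Reachable.refl z) (by simp)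
      hΔ.le (by simp) (by rw [← hΔdef]; exact hΔn)
    exact ⟨w, hwre, hw2, hwdr⟩

lemma hpiece (hα₁ : 0 ≤ α₁) (hα₂ : 0 ≤ α₂) (hκ₂ : 0 < κ₂) (z' : ℝ × ℝ) (X Ym B : ℝ)
    (hX : |z'.1| + 1 ≤ X) (hYm : |z'.2| + 1 ≤ Ym) (hB : 0 < B)
    (hB1 : |a₁| * X + α₁ * X ^ 2 + Ym ^ 2 ≤ B) (hB2 : |a₂| * Ym + α₂ * X * Ym ≤ B)
    (hm : ∀ p : ℝ × ℝ, p ∈ closedBall z' 1 → 1 ≤ a₁ * p.1 - α₁ * p.1 ^ 2 + p.2 ^ 2)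
    (x_t : ℝ) (hx : z'.1 < x_t) :
    ∃ w : ℝ × ℝ, Reachable a₁ a₂ α₁ α₂ κ₁ κ₂ z' w ∧ |w.2 - z'.2| ≤ 1 ∧ z'.1 < w.1 ∧
      (w.1 = x_t ∨ (w.1 < x_t ∧ z'.1 + 1 / (2 * B) ≤ w.1)) := by
  set Fv : ℝ × ℝ → ℝ × ℝ := fun z =>
    (a₁ * z.1 - α₁ * z.1 ^ 2 + z.2 ^ 2 + κ₁ * 0,
      a₂ * z.2 - α₂ * z.1 * z.2 + κ₂ * 0) with hFv
  have hFc : ContDiff ℝ 1 Fv := by rw [hFv]; fun_prop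
  have hXnn : 0 ≤ X := le_trans (by positivity) hX
  have hT0 : (0:ℝ) < 1 / (2 * B) := by positivity
  have hco : ∀ p ∈ closedBall z' 1, |p.1| ≤ X ∧ |p.2| ≤ Ym := by
    intro p hp
    obtain ⟨h1, h2⟩ := ball_coord hp
    constructor
    · calc |p.1| ≤ |z'.1| + |p.1 - z'.1| := by
            have := abs_add_le z'.1 (p.1 - z'.1); simpa using this
        _ ≤ X := by linarith
    · calc |p.2| ≤ |z'.2| + |p.2 - z'.2| := by
            have := abs_add_le z'.2 (p.2 - z'.2); simpa using this
        _ ≤ Ym := by linarith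
  have habs1 : ∀ p ∈ closedBall z' 1, |(Fv p).1| ≤ B := by
    intro p hp
    obtain ⟨h1, h2⟩ := hco p hp
    have := abs_comp1 (a := a₁) hα₁ h1 h2
    simpa [hFv, mul_zero, add_zero] using this.trans hB1
  have habs2 : ∀ p ∈ closedBall z' 1, |(Fv p).2| ≤ B := by
    intro p hp
    obtain ⟨h1, h2⟩ := hco p hp
    have := abs_comp2 (a := a₂) hα₂ hXnn h1 h2
    simpa [hFv, mul_zero, add_zero] using this.trans hB2
  have hCb : ∀ p ∈ closedBall z' 1, ‖Fv p‖ ≤ B := by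
    intro p hp
    rw [Prod.norm_def, max_le_iff, Real.norm_eq_abs, Real.norm_eq_abs]
    exact ⟨habs1 p hp, habs2 p hp⟩
  have hCT : B * (1 / (2 * B)) < 1 := by
    rw [mul_one_div, div_lt_one (by linarith)]; linarith
  obtain ⟨γ, hγ0, hγp⟩ := exists_sol Fv hFc z' 1 B (1 / (2 * B)) one_pos hT0 hCb hCT
  set T : ℝ := 1 / (2 * B) with hT
  set g : ℝ → ℝ := fun t => (γ t).1 with hg
  have hgd : ∀ t ∈ Icc (0:ℝ) T, HasDerivAt g ((Fv (γ t)).1) t := fun t ht =>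
    deriv_fst (hγp t ht).1
  have hglo : ∀ t ∈ Icc (0:ℝ) T, 1 ≤ (Fv (γ t)).1 := by
    intro t ht
    have := hm (γ t) (hγp t ht).2
    simpa [hFv, mul_zero, add_zero] using this
  have hghi : ∀ t ∈ Icc (0:ℝ) T, (Fv (γ t)).1 ≤ B := fun t ht =>
    le_trans (le_abs_self _) (habs1 (γ t) (hγp t ht).2)
  have hgest := scalar_est g (fun t => (Fv (γ t)).1) T 1 B hT0.le hgd hglo hghi
  have hgcont : ContinuousOn g (Icc 0 T) := fun t ht =>
    ((hgd t ht).continuousAt).continuousWithinAt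
  have hg0 : g 0 = z'.1 := by simp only [hg, hγ0]
  have key : ∀ t₀ ∈ Icc (0:ℝ) T, Reachable a₁ a₂ α₁ α₂ κ₁ κ₂ z' (γ t₀) ∧
      |(γ t₀).2 - z'.2| ≤ 1 := by
    intro t₀ ht₀
    constructor
    · refine Reachable.step 0 0 t₀ γ ht₀.1 (fun r hr => ?_) hγ0 rfl (Reachable.refl z')
      exact (hγp r ⟨hr.1, hr.2.trans ht₀.2⟩).1
    · exact (ball_coord (hγp t₀ ht₀).2).2
  rcases le_or_gt x_t (g T) with hhit | hnohit
  · have hmem : x_t ∈ Icc (g 0) (g T) := ⟨by rw [hg0]; exact hx.le, hhit⟩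
    obtain ⟨t₀, ht₀, hgt₀⟩ := intermediate_value_Icc hT0.le hgcont hmem
    obtain ⟨hre, hdr⟩ := key t₀ ht₀
    refine ⟨γ t₀, hre, hdr, ?_, Or.inl hgt₀⟩
    rw [show (γ t₀).1 = x_t from hgt₀]; exact hx
  · obtain ⟨hre, hdr⟩ := key T ⟨hT0.le, le_rfl⟩
    have hprog : 1 * T ≤ g T - g 0 := (hgest T ⟨hT0.le, le_rfl⟩).1
    rw [one_mul, hg0] at hprog
    refine ⟨γ T, hre, hdr, by linarith, Or.inr ⟨hnohit, by simp only [hg] at hprog; linarith⟩⟩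

lemma reachH (hα₁ : 0 ≤ α₁) (hα₂ : 0 ≤ α₂) (hκ₂ : 0 < κ₂) (z : ℝ × ℝ) (x_t y_t ε : ℝ)
    (hzx : z.1 ≤ x_t) (hε : 0 < ε) :
    ∃ w : ℝ × ℝ, Reachable a₁ a₂ α₁ α₂ κ₁ κ₂ z w ∧ |w.1 - x_t| ≤ ε ∧ w.2 = y_t := by
  rcases eq_or_lt_of_le hzx with heq | hlt
  · obtain ⟨w, hre, hw2, hw1⟩ := reachV (a₁ := a₁) (a₂ := a₂) (κ₁ := κ₁) hα₁ hα₂ hκ₂ z y_t ε hε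
    exact ⟨w, hre, by rw [← heq]; exact hw1, hw2⟩
  · obtain ⟨X, hXdef⟩ : ∃ d : ℝ, d = max |z.1| |x_t| + 2 := ⟨_, rfl⟩
    have hXz : |z.1| + 2 ≤ X := by rw [hXdef]; linarith [le_max_left |z.1| |x_t|]
    have hXt : |x_t| + 2 ≤ X := by rw [hXdef]; linarith [le_max_right |z.1| |x_t|]
    have hXnn : 0 ≤ X := le_trans (by positivity) hXz
    obtain ⟨Y, hYdef⟩ : ∃ d : ℝ, d = |a₁| * X + α₁ * X ^ 2 + 2 := ⟨_, rfl⟩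
    have haX : 0 ≤ |a₁| * X := by positivity
    have haX2 : 0 ≤ α₁ * X ^ 2 := by positivity
    have hY2 : 2 ≤ Y := by rw [hYdef]; linarith
    obtain ⟨Ym, hYmdef⟩ : ∃ d : ℝ, d = Y + 2 := ⟨_, rfl⟩
    obtain ⟨B, hBdef⟩ : ∃ d : ℝ, d = |a₁| * X + α₁ * X ^ 2 + Ym ^ 2 + |a₂| * Ym + α₂ * X * Ym + 1 := ⟨_, rfl⟩
    have hYmnn : 0 ≤ Ym := by rw [hYmdef]; linarith
    have t4 : 0 ≤ |a₂| * Ym := mul_nonneg (abs_nonneg _) hYmnn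
    have t5 : 0 ≤ α₂ * X * Ym := mul_nonneg (mul_nonneg hα₂ hXnn) hYmnn
    have t3 : 0 ≤ Ym ^ 2 := sq_nonneg _
    have hB0 : 0 < B := by rw [hBdef]; linarith
    have hB1 : |a₁| * X + α₁ * X ^ 2 + Ym ^ 2 ≤ B := by rw [hBdef]; linarith
    have hB2 : |a₂| * Ym + α₂ * X * Ym ≤ B := by rw [hBdef]; linarith
    obtain ⟨ρ, hρdef⟩ : ∃ d : ℝ, d = 1 / (2 * B) := ⟨_, rfl⟩
    have hρ0 : 0 < ρ := by rw [hρdef]; positivity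
    -- common facts for points in the strip
    have hstrip : ∀ z' : ℝ × ℝ, z'.2 = Y → z.1 - 1 ≤ z'.1 → z'.1 < x_t →
        (|z'.1| + 1 ≤ X ∧ |z'.2| + 1 ≤ Ym ∧
          ∀ p : ℝ × ℝ, p ∈ closedBall z' 1 → 1 ≤ a₁ * p.1 - α₁ * p.1 ^ 2 + p.2 ^ 2) := by
      intro z' hz2 hzlo hzhi
      have habs : |z'.1| ≤ X - 1 := by
        rw [abs_le]
        constructor
        · have := neg_abs_le z.1; linarith
        · have := le_abs_self x_t; linarith
      refine ⟨by linarith, by rw [hz2, abs_of_nonneg (by linarith : (0:ℝ) ≤ Y), hYmdef]; linarith, ?_⟩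
      intro p hp
      obtain ⟨hp1, hp2⟩ := ball_coord hp
      have hpx : |p.1| ≤ X := by
        have := abs_add_le z'.1 (p.1 - z'.1)
        simp only [add_sub_cancel] at this
        linarith
      have ha1 : -( |a₁| * X) ≤ a₁ * p.1 := by
        have h1 : |a₁ * p.1| ≤ |a₁| * X := by
          rw [abs_mul]; exact mul_le_mul_of_nonneg_left hpx (abs_nonneg _)
        linarith [neg_abs_le (a₁ * p.1)]
      have ha2 : α₁ * p.1 ^ 2 ≤ α₁ * X ^ 2 := by
        have : p.1 ^ 2 ≤ X ^ 2 := by nlinarith [neg_abs_le p.1, le_abs_self p.1, abs_nonneg p.1]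
        exact mul_le_mul_of_nonneg_left this hα₁
      have hpy : Y - 1 ≤ p.2 := by
        rw [hz2] at hp2
        have := neg_abs_le (p.2 - Y); linarith [abs_sub_comm p.2 Y ▸ hp2]
      have hpy2 : Y - 1 ≤ p.2 ^ 2 := by nlinarith
      rw [hYdef] at hpy2
      linarith
    -- induction
    have main : ∀ k : ℕ, ∀ z' : ℝ × ℝ, Reachable a₁ a₂ α₁ α₂ κ₁ κ₂ z z' → z'.2 = Y →
        z.1 - 1 ≤ z'.1 → z'.1 < x_t → x_t - z'.1 ≤ k * (ρ / 2) →
        ∃ w : ℝ × ℝ, Reachable a₁ a₂ α₁ α₂ κ₁ κ₂ z w ∧ |w.1 - x_t| ≤ ε ∧ w.2 = y_t := by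
      intro k
      induction k with
      | zero => intro z' _ _ _ hzhi hk; exfalso; simp at hk; linarith
      | succ k ih =>
        intro z' hre hz2 hzlo hzhi hk
        obtain ⟨hX', hYm', hm'⟩ := hstrip z' hz2 hzlo hzhi
        obtain ⟨w1, hw1re, hw1y, hw1gt, hw1case⟩ :=
          hpiece (a₁ := a₁) (κ₁ := κ₁) hα₁ hα₂ hκ₂ z' X Ym B hX' hYm' hB0 hB1 hB2 hm' x_t hzhi
        have hw1reach : Reachable a₁ a₂ α₁ α₂ κ₁ κ₂ z w1 := reach_trans hre hw1re
        rcases hw1case with hhit | ⟨hlt1, hprog⟩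
        · obtain ⟨w, hwre, hw2, hwdr⟩ :=
            reachV (a₁ := a₁) (a₂ := a₂) (κ₁ := κ₁) hα₁ hα₂ hκ₂ w1 y_t ε hε
          exact ⟨w, reach_trans hw1reach hwre, by rw [← hhit]; exact hwdr, hw2⟩
        · have hprog' : z'.1 + ρ ≤ w1.1 := by rw [hρdef]; exact hprog
          obtain ⟨η, hηdef⟩ : ∃ d : ℝ, d = min (ρ / 4) ((x_t - w1.1) / 2) := ⟨_, rfl⟩
          have hη0 : 0 < η := by
            rw [hηdef]; apply lt_min (by linarith) (by linarith)
          obtain ⟨w2, hw2re, hw2y, hw2dr⟩ :=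
            reachV (a₁ := a₁) (a₂ := a₂) (κ₁ := κ₁) hα₁ hα₂ hκ₂ w1 Y η hη0
          have hw2reach : Reachable a₁ a₂ α₁ α₂ κ₁ κ₂ z w2 := reach_trans hw1reach hw2re
          have hab := abs_le.mp hw2dr
          have hη1 : η ≤ ρ / 4 := by rw [hηdef]; exact min_le_left _ _
          have hη2 : η ≤ (x_t - w1.1) / 2 := by rw [hηdef]; exact min_le_right _ _
          have hw2lt : w2.1 < x_t := by linarith [hab.2]
          have hw2lo : z.1 - 1 ≤ w2.1 := by linarith [hab.1]
          have hw2rem : x_t - w2.1 ≤ k * (ρ / 2) := by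
            have h1 : x_t - w2.1 ≤ x_t - z'.1 - ρ + ρ / 4 := by linarith [hab.1]
            have h2 : x_t - z'.1 ≤ (k + 1) * (ρ / 2) := by push_cast [Nat.cast_succ] at hk; linarith
            push_cast
            linarith
          exact ih w2 hw2reach hw2y hw2lo hw2lt hw2rem
    -- phase 1
    obtain ⟨δ, hδdef⟩ : ∃ d : ℝ, d = min (min 1 ε) ((x_t - z.1) / 2) := ⟨_, rfl⟩
    have hδ0 : 0 < δ := by
      rw [hδdef]
      exact lt_min (lt_min one_pos hε) (by linarith)
    obtain ⟨z₁, hz₁re, hz₁y, hz₁dr⟩ :=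
      reachV (a₁ := a₁) (a₂ := a₂) (κ₁ := κ₁) hα₁ hα₂ hκ₂ z Y δ hδ0
    have habδ := abs_le.mp hz₁dr
    have hδ1 : δ ≤ 1 := by rw [hδdef]; exact le_trans (min_le_left _ _) (min_le_left _ _)
    have hδ2 : δ ≤ (x_t - z.1) / 2 := by rw [hδdef]; exact min_le_right _ _
    have hz₁lt : z₁.1 < x_t := by linarith [habδ.2]
    have hz₁lo : z.1 - 1 ≤ z₁.1 := by linarith [habδ.1]
    obtain ⟨n, hn⟩ := exists_nat_ge ((x_t - z₁.1) / (ρ / 2))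
    have hrem : x_t - z₁.1 ≤ n * (ρ / 2) := by
      rw [div_le_iff₀ (by linarith)] at hn; linarith
    exact main n z₁ hz₁re hz₁y hz₁lo hz₁lt hrem

end

/-- the closure of the accessibility set `A(z₀)` contains the closed
half-plane `{(u,v) : u ≥ x₀}`. -/
theorem statement12 (a₁ a₂ α₁ α₂ κ₁ κ₂ : ℝ) (hα₁ : 0 < α₁) (hα : α₁ < α₂)
    (hκ₁ : 0 ≤ κ₁) (hκ₂ : 0 < κ₂) (z₀ : ℝ × ℝ) :
    {p : ℝ × ℝ | z₀.1 ≤ p.1}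
      ⊆ closure {w : ℝ × ℝ | Reachable a₁ a₂ α₁ α₂ κ₁ κ₂ z₀ w} := by
  intro p hp
  rw [Metric.mem_closure_iff]
  intro ε hε
  have hα₂0 : 0 ≤ α₂ := (hα₁.trans hα).le
  obtain ⟨w, hwre, hw1, hw2⟩ :=
    reachH (κ₁ := κ₁) hα₁.le hα₂0 hκ₂ z₀ p.1 p.2 (ε / 2) hp (by linarith)
  refine ⟨w, hwre, ?_⟩
  rw [Prod.dist_eq]
  have h2 : dist p.2 w.2 = 0 := by rw [hw2]; simp
  have h1 : dist p.1 w.1 ≤ ε / 2 := by rw [Real.dist_eq, abs_sub_comm]; exact hw1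
  rw [h2]
  calc max (dist p.1 w.1) 0 ≤ ε / 2 := max_le h1 (by linarith)
    _ < ε := by linarith
end
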